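/- For all real x with 0 < x < π/2, (x² + λ + 2)·cos(x) + 6x·sin(x) > 0 for every λ > 0, and hence N''(x) = ((x² + λ + 6)·sin(x) − 4x·cos(x))·(x² + λ) + 12·sin(x) > 0 on (0, π/2). -/
import Mathlib


theorem stmt_16 (lam : ℝ) (hl : 0 < lam) (x : ℝ) (hx : 0 < x) (hx' : x < Real.pi / 2) :
    0 < (x ^ 2 + lam + 2) * Real.cos x + 6 * x * Real.sin x ∧
    0 < ((x ^ 2 + lam + 6) * Real.sin x - 4 * x * Real.cos x) * (x ^ 2 + lam)
        + 12 * Real.sin x := by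
  have hc : 0 < Real.cos x := Real.cos_pos_of_mem_Ioo
    ⟨by linarith [Real.pi_pos], hx'⟩
  have hs : 0 < Real.sin x := Real.sin_pos_of_pos_of_lt_pi hx
    (by linarith [Real.pi_pos])
  have htan : x < Real.tan x := Real.lt_tan hx hx'
  have hxc : x * Real.cos x < Real.sin x := by
    rw [Real.tan_eq_sin_div_cos] at htan
    exact (lt_div_iff₀ hc).mp htan
  constructor
  · nlinarith
  · have hpos : (0:ℝ) < x ^ 2 + lam := by positivity
    have hbr : 0 < (x ^ 2 + lam + 6) * Real.sin x - 4 * x * Real.cos x := by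
      nlinarith [mul_pos hx hc, mul_lt_mul_of_pos_left hxc (by positivity : (0:ℝ) < x ^ 2 + lam + 6)]
    nlinarith [mul_pos hbr hpos]
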